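/- On the open set U = { x ∈ ℝ⁴ : x₃ > 0 } (coordinates x⁰,x¹,x²,x³) define the symmetric matrix-valued function g with nonzero components g₀₀ = 1/x³, g₀₁ = g₁₀ = x²/x³, g₁₁ = x³ + (x²)²/x³, g₂₂ = x³, g₃₃ = x³ (all other components zero), and the vector field D with components D⁰ = 2x⁰, D¹ = x¹, D² = x², D³ = x³. Then for all a, b ∈ {0,1,2,3} and all points of U: Σ_c D^c·∂_c g_{ab} + Σ_c g_{cb}·∂_a D^c + Σ_c g_{ac}·∂_b D^c = 3·g_{ab}. -/

import Mathlib

/-- Partial derivative in the `a`-th coordinate direction on Euclidean ℝ⁴. -/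
noncomputable def pdR (a : Fin 4) (f : EuclideanSpace ℝ (Fin 4) → ℝ)
    (x : EuclideanSpace ℝ (Fin 4)) : ℝ :=
  fderiv ℝ f x (EuclideanSpace.single a 1)

section Helpers

local notation "E" => EuclideanSpace ℝ (Fin 4)

lemma pdR_eq' (f : E → ℝ) (L : E →L[ℝ] ℝ) (x : E) (h : HasFDerivAt f L x) (c : Fin 4) :
    pdR c f x = L (EuclideanSpace.single c 1) := by
  rw [pdR, h.fderiv]

lemma hP (i : Fin 4) (x : E) : HasFDerivAt (fun y : E => y i) (EuclideanSpace.proj (𝕜:=ℝ) i) x :=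
  (EuclideanSpace.proj (𝕜:=ℝ) i).hasFDerivAt

lemma hInv (x : E) (hx : x 3 ≠ 0) :
    HasFDerivAt (fun y : E => (y 3)⁻¹) (-(x 3 ^ 2)⁻¹ • EuclideanSpace.proj (𝕜:=ℝ) 3) x := by
  simpa [Function.comp_def] using (hasDerivAt_inv hx).comp_hasFDerivAt x (hP 3 x)

lemma pd_coord (x : E) (i c : Fin 4) : pdR c (fun y : E => y i) x = if c = i then 1 else 0 := by
  rw [pdR_eq' _ _ _ (hP i x)]
  simp [EuclideanSpace.single_apply, eq_comm]

lemma pd_const (x : E) (k : ℝ) (c : Fin 4) : pdR c (fun _ : E => k) x = 0 := by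
  simp [pdR]

lemma pd_two (x : E) (c : Fin 4) : pdR c (fun y : E => 2 * y 0) x = if c = 0 then 2 else 0 := by
  rw [pdR_eq' _ _ _ ((hP 0 x).const_mul 2)]
  fin_cases c <;> simp (config := { decide := true }) [EuclideanSpace.single_apply]

lemma pd_inv (x : E) (hx : x 3 ≠ 0) (c : Fin 4) :
    pdR c (fun y : E => (y 3)⁻¹) x = if c = 3 then -(x 3 ^ 2)⁻¹ else 0 := by
  rw [pdR_eq' _ _ _ (hInv x hx)]
  fin_cases c <;> simp (config := { decide := true }) [EuclideanSpace.single_apply]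

lemma hDiv (x : E) (hx : x 3 ≠ 0) :
    HasFDerivAt (fun y : E => y 2 / y 3)
      ((x 2 : ℝ) • (-(x 3 ^ 2)⁻¹ • EuclideanSpace.proj (𝕜:=ℝ) (3:Fin 4))
        + ((x 3)⁻¹ : ℝ) • EuclideanSpace.proj (𝕜:=ℝ) (2:Fin 4)) x := by
  have h := HasFDerivAt.mul (𝕜 := ℝ) (hP 2 x) (hInv x hx)
  simpa [div_eq_mul_inv, Pi.mul_def] using h

lemma pd_g01 (x : E) (hx : x 3 ≠ 0) (c : Fin 4) :
    pdR c (fun y : E => y 2 / y 3) x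
      = if c = 2 then 1 / x 3 else if c = 3 then -(x 2 / x 3 ^ 2) else 0 := by
  rw [pdR_eq' _ _ _ (hDiv x hx)]
  fin_cases c <;> simp (config := { decide := true }) [EuclideanSpace.single_apply] <;>
    field_simp

lemma pd_g11 (x : E) (hx : x 3 ≠ 0) (c : Fin 4) :
    pdR c (fun y : E => y 3 + y 2 ^ 2 / y 3) x
      = if c = 2 then 2 * x 2 / x 3 else if c = 3 then 1 - x 2 ^ 2 / x 3 ^ 2 else 0 := by
  have h22 := HasFDerivAt.mul (𝕜 := ℝ)
    (HasFDerivAt.mul (𝕜 := ℝ) (hP 2 x) (hP 2 x)) (hInv x hx)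
  have h3 : HasFDerivAt (fun y : E => y 3) ((EuclideanSpace.proj (𝕜:=ℝ) 3 : E →L[ℝ] ℝ)) x := hP 3 x
  have h := HasFDerivAt.add (𝕜 := ℝ) h3 h22
  have h' : HasFDerivAt (fun y : E => (y 3 : ℝ) + y 2 ^ 2 / y 3)
      (EuclideanSpace.proj (𝕜:=ℝ) (3:Fin 4) +
        ((x 2 * x 2) • -(x 3 ^ 2)⁻¹ • EuclideanSpace.proj (𝕜:=ℝ) (3:Fin 4) +
          (x 3)⁻¹ • ((x 2 : ℝ) • EuclideanSpace.proj (𝕜:=ℝ) (2:Fin 4)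
            + (x 2 : ℝ) • EuclideanSpace.proj (𝕜:=ℝ) (2:Fin 4)))) x := by
    simpa [div_eq_mul_inv, sq, Pi.mul_def, Pi.add_def] using h
  rw [pdR_eq' _ _ _ h']
  fin_cases c <;> simp (config := { decide := true }) [EuclideanSpace.single_apply] <;>
    field_simp <;> ring

end Helpers

/-- The component matrix of the Gibbons–Hawking metric with potential `V = x³`:
`g₀₀ = 1/x³`, `g₀₁ = g₁₀ = x²/x³`, `g₁₁ = x³ + (x²)²/x³`, `g₂₂ = g₃₃ = x³`. -/
noncomputable def gGH (x : EuclideanSpace ℝ (Fin 4)) : Fin 4 → Fin 4 → ℝ :=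
  !![1 / x 3,       x 2 / x 3,                 0,   0;
     x 2 / x 3,     x 3 + (x 2) ^ 2 / x 3,     0,   0;
     0,             0,                         x 3, 0;
     0,             0,                         0,   x 3]

/-- The components of the homothetic vector field `D = 2x⁰∂₀ + x¹∂₁ + x²∂₂ + x³∂₃`. -/
noncomputable def Dvec : Fin 4 → EuclideanSpace ℝ (Fin 4) → ℝ :=
  ![fun x => 2 * x 0, fun x => x 1, fun x => x 2, fun x => x 3]

set_option maxHeartbeats 1000000 in
/-- `D` is a homothety of the Gibbons–Hawking domain-wall metric:
`ℒ_D g = 3g`, i.e. `D^c ∂_c g_{ab} + g_{cb}∂_a D^c + g_{ac}∂_b D^c = 3 g_{ab}` on `x₃ > 0`. -/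
theorem homothety_of_gibbons_hawking_metric :
    ∀ x : EuclideanSpace ℝ (Fin 4), x 3 > 0 → ∀ a b : Fin 4,
      (∑ c : Fin 4, Dvec c x * pdR c (fun y => gGH y a b) x)
        + (∑ c : Fin 4, gGH x c b * pdR a (fun y => Dvec c y) x)
        + (∑ c : Fin 4, gGH x a c * pdR b (fun y => Dvec c y) x)
      = 3 * gGH x a b := by
  intro x hx a b
  have h3 : x 3 ≠ 0 := ne_of_gt hx
  fin_cases a <;> fin_cases b <;>
    (simp [gGH, Dvec, Fin.sum_univ_four];
     simp only [pd_coord x, pd_const x, pd_two x, pd_inv x h3, pd_g01 x h3, pd_g11 x h3];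
     simp (config := { decide := true }) [Matrix.vecHead, Matrix.vecTail]) <;>
    (try field_simp) <;> (try ring)
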